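/- Let C, K be real n×n matrices, let Λ1, Λ2 be diagonal real n×n matrices with Λ2 − Λ1 invertible, and let V1, V2 be real n×n matrices satisfying V1·Λ1² + C·V1·Λ1 + K·V1 = 0 and V2·Λ2² + C·V2·Λ2 + K·V2 = 0. Define T1 := (V1·Λ2 − V2·Λ1)·(Λ2 − Λ1)⁻¹, T2 := (V2 − V1)·(Λ2 − Λ1)⁻¹, T3 := (V1 − V2)·(Λ1·Λ2)·(Λ2 − Λ1)⁻¹, T4 := (V2·Λ2 − V1·Λ1)·(Λ2 − Λ1)⁻¹, and set D := −(Λ1 + Λ2), B := Λ1·Λ2. Then for every twice differentiable curve p : ℝ → ℝⁿ satisfying the decoupled system p'' + D·p' + B·p = 0, the curve q := T1·p + T2·p' satisfies q' = T3·p + T4·p' and solves the original system q'' + C·q' + K·q = 0. -/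

import Mathlib

private lemma diag_mul_comm {n : ℕ} {A B : Matrix (Fin n) (Fin n) ℝ}
    (hA : A.IsDiag) (hB : B.IsDiag) : A * B = B * A := by
  rw [← hA.diagonal_diag, ← hB.diagonal_diag, Matrix.diagonal_mul_diagonal,
    Matrix.diagonal_mul_diagonal]
  simp [mul_comm]

private lemma comm_inv {n : ℕ} {A S : Matrix (Fin n) (Fin n) ℝ}
    (h : A * S = S * A) (hS : IsUnit S) : S⁻¹ * A = A * S⁻¹ := by
  have hd := (Matrix.isUnit_iff_isUnit_det S).mp hS
  have h1 := Matrix.nonsing_inv_mul S hd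
  have h2 := Matrix.mul_nonsing_inv S hd
  calc S⁻¹ * A = S⁻¹ * A * (S * S⁻¹) := by rw [h2, mul_one]
  _ = S⁻¹ * (A * S) * S⁻¹ := by simp only [mul_assoc]
  _ = S⁻¹ * S * A * S⁻¹ := by rw [mul_assoc S⁻¹ S A, h]
  _ = A * S⁻¹ := by rw [h1, one_mul]

private lemma hasDerivAt_mulVec {n : ℕ} (T : Matrix (Fin n) (Fin n) ℝ)
    {f : ℝ → Fin n → ℝ} {f' : Fin n → ℝ} {t : ℝ}
    (hf : HasDerivAt f f' t) :
    HasDerivAt (fun s => T.mulVec (f s)) (T.mulVec f') t := by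
  have := (Matrix.mulVecLin T).toContinuousLinearMap.hasFDerivAt.comp_hasDerivAt t hf
  exact this

/-- Main solution-transfer statement of phase synchronization: with
real diagonal `Λ1, Λ2` (`Λ2 − Λ1` invertible) and real `V1, V2` solving the
quadratic matrix equations, the explicit matrices `T1, …, T4` carry every solution
`p` of the decoupled system `p'' + D·p' + B·p = 0` (with `D = −(Λ1+Λ2)`,
`B = Λ1·Λ2`) to a curve `q := T1·p + T2·p'` with `q' = T3·p + T4·p'` solving
`q'' + C·q' + K·q = 0`. -/
theorem stmt16 {n : ℕ} (C K Λ1 Λ2 V1 V2 : Matrix (Fin n) (Fin n) ℝ)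
    (hΛ1 : Λ1.IsDiag) (hΛ2 : Λ2.IsDiag) (hinv : IsUnit (Λ2 - Λ1))
    (hV1 : V1 * Λ1 ^ 2 + C * V1 * Λ1 + K * V1 = 0)
    (hV2 : V2 * Λ2 ^ 2 + C * V2 * Λ2 + K * V2 = 0) :
    let T1 := (V1 * Λ2 - V2 * Λ1) * (Λ2 - Λ1)⁻¹
    let T2 := (V2 - V1) * (Λ2 - Λ1)⁻¹
    let T3 := (V1 - V2) * (Λ1 * Λ2) * (Λ2 - Λ1)⁻¹
    let T4 := (V2 * Λ2 - V1 * Λ1) * (Λ2 - Λ1)⁻¹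
    let D := -(Λ1 + Λ2)
    let B := Λ1 * Λ2
    ∀ p p' p'' : ℝ → Fin n → ℝ,
      (∀ t, HasDerivAt p (p' t) t) →
      (∀ t, HasDerivAt p' (p'' t) t) →
      (∀ t, p'' t + D.mulVec (p' t) + B.mulVec (p t) = 0) →
      (∀ t, HasDerivAt (fun s => T1.mulVec (p s) + T2.mulVec (p' s))
          (T3.mulVec (p t) + T4.mulVec (p' t)) t) ∧
      (∀ t, HasDerivAt (fun s => T3.mulVec (p s) + T4.mulVec (p' s))
          (T3.mulVec (p' t) + T4.mulVec (p'' t)) t) ∧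
      (∀ t, (T3.mulVec (p' t) + T4.mulVec (p'' t))
          + C.mulVec (T3.mulVec (p t) + T4.mulVec (p' t))
          + K.mulVec (T1.mulVec (p t) + T2.mulVec (p' t)) = 0) := by
  intro T1 T2 T3 T4 D B p p' p'' hp hp' hode
  set S := Λ2 - Λ1 with hS
  -- commutation facts
  have hc : Λ1 * Λ2 = Λ2 * Λ1 := diag_mul_comm hΛ1 hΛ2
  have hc12 : (Λ1 * Λ2) * S = S * (Λ1 * Λ2) := by
    rw [hS]; linear_combination (norm := noncomm_ring) hc * Λ2 + Λ1 * hc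
  have hcs : (Λ1 + Λ2) * S = S * (Λ1 + Λ2) := by
    rw [hS]; linear_combination (norm := noncomm_ring) hc + hc
  have hi1 : S⁻¹ * (Λ1 * Λ2) = (Λ1 * Λ2) * S⁻¹ := comm_inv hc12 hinv
  have hi2 : S⁻¹ * (Λ1 + Λ2) = (Λ1 + Λ2) * S⁻¹ := comm_inv hcs hinv
  -- matrix identities
  have M1 : T1 + T2 * (Λ1 + Λ2) = T4 := by
    show (V1 * Λ2 - V2 * Λ1) * S⁻¹ + (V2 - V1) * S⁻¹ * (Λ1 + Λ2) = (V2 * Λ2 - V1 * Λ1) * S⁻¹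
    rw [mul_assoc, hi2, ← mul_assoc, ← add_mul]
    congr 1
    noncomm_ring
  have M2 : T2 * (Λ1 * Λ2) = -T3 := by
    show (V2 - V1) * S⁻¹ * (Λ1 * Λ2) = -((V1 - V2) * (Λ1 * Λ2) * S⁻¹)
    rw [mul_assoc, hi1, ← mul_assoc, ← neg_mul]
    congr 1
    noncomm_ring
  have M3 : T4 * (Λ1 * Λ2) = C * T3 + K * T1 := by
    show (V2 * Λ2 - V1 * Λ1) * S⁻¹ * (Λ1 * Λ2)
        = C * ((V1 - V2) * (Λ1 * Λ2) * S⁻¹) + K * ((V1 * Λ2 - V2 * Λ1) * S⁻¹)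
    rw [mul_assoc, hi1, ← mul_assoc, ← mul_assoc C, ← mul_assoc K, ← add_mul]
    congr 1
    linear_combination (norm := noncomm_ring) -(hV1 * Λ2) + hV2 * Λ1 + V2 * Λ2 * hc + C * V2 * hc
  have M4 : T3 + T4 * (Λ1 + Λ2) + C * T4 + K * T2 = 0 := by
    show (V1 - V2) * (Λ1 * Λ2) * S⁻¹ + (V2 * Λ2 - V1 * Λ1) * S⁻¹ * (Λ1 + Λ2)
        + C * ((V2 * Λ2 - V1 * Λ1) * S⁻¹) + K * ((V2 - V1) * S⁻¹) = 0
    rw [mul_assoc (V2 * Λ2 - V1 * Λ1), hi2, ← mul_assoc (V2 * Λ2 - V1 * Λ1),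
      ← mul_assoc C, ← mul_assoc K, ← add_mul, ← add_mul, ← add_mul]
    rw [show (0 : Matrix (Fin n) (Fin n) ℝ) = 0 * S⁻¹ by rw [zero_mul]]
    congr 1
    linear_combination (norm := noncomm_ring) hV2 - hV1 - V2 * hc
  -- pointwise consequence of the ODE
  have hw : ∀ t, p'' t = (Λ1 + Λ2).mulVec (p' t) - (Λ1 * Λ2).mulVec (p t) := by
    intro t
    have h := hode t
    have hD : D = -(Λ1 + Λ2) := rfl
    have hB : B = Λ1 * Λ2 := rfl
    rw [hD, hB, Matrix.neg_mulVec] at h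
    linear_combination h
  refine ⟨?_, ?_, ?_⟩
  · intro t
    have hd := (hasDerivAt_mulVec T1 (hp t)).add (hasDerivAt_mulVec T2 (hp' t))
    have key : T1.mulVec (p' t) + T2.mulVec (p'' t)
        = T3.mulVec (p t) + T4.mulVec (p' t) := by
      rw [hw t, Matrix.mulVec_sub, Matrix.mulVec_mulVec, Matrix.mulVec_mulVec, M2, ← M1,
        Matrix.neg_mulVec, Matrix.add_mulVec]
      abel
    rwa [key] at hd
  · intro t
    exact (hasDerivAt_mulVec T3 (hp t)).add (hasDerivAt_mulVec T4 (hp' t))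
  · intro t
    have e3 : (T4 * (Λ1 * Λ2)).mulVec (p t)
        = (C * T3).mulVec (p t) + (K * T1).mulVec (p t) := by
      rw [M3, Matrix.add_mulVec]
    have e4 : T3.mulVec (p' t) + (T4 * (Λ1 + Λ2)).mulVec (p' t)
        + (C * T4).mulVec (p' t) + (K * T2).mulVec (p' t) = 0 := by
      rw [← Matrix.add_mulVec, ← Matrix.add_mulVec, ← Matrix.add_mulVec, M4,
        Matrix.zero_mulVec]
    rw [hw t]
    simp only [Matrix.mulVec_add, Matrix.mulVec_sub, Matrix.mulVec_mulVec]
    linear_combination e4 - e3
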